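/- Let φ = (1/4)(I⊗I + a X⊗X + b Y⊗Y + c Z⊗Z) with a,b,c ∈ [0,1]. If φ is positive semidefinite (a valid two-qubit state), then a + b + c ≤ 1, the partial transpose of φ is also positive semidefinite, and hence φ is separable. -/

import Mathlib

open Matrix Kronecker
open scoped ComplexOrder

noncomputable def pauliX : Matrix (Fin 2) (Fin 2) ℂ := !![0, 1; 1, 0]
noncomputable def pauliY : Matrix (Fin 2) (Fin 2) ℂ := !![0, -Complex.I; Complex.I, 0]
noncomputable def pauliZ : Matrix (Fin 2) (Fin 2) ℂ := !![1, 0; 0, -1]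

/-- Partial transpose on the second tensor factor of a two-qubit operator. -/
def ptransposeB (φ : Matrix (Fin 2 × Fin 2) (Fin 2 × Fin 2) ℂ) :
    Matrix (Fin 2 × Fin 2) (Fin 2 × Fin 2) ℂ :=
  fun p q => φ (p.1, q.2) (q.1, p.2)

/-- A two-qubit operator is separable if it is a finite nonnegative combination of
tensor products of positive semidefinite operators. -/
def Separable2 (φ : Matrix (Fin 2 × Fin 2) (Fin 2 × Fin 2) ℂ) : Prop :=
  ∃ (k : ℕ) (w : Fin k → ℝ) (M N : Fin k → Matrix (Fin 2) (Fin 2) ℂ),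
    (∀ i, 0 ≤ w i) ∧ (∀ i, (M i).PosSemidef) ∧ (∀ i, (N i).PosSemidef) ∧
    φ = ∑ i, (w i : ℂ) • (M i ⊗ₖ N i)

section Aux

lemma psd_vecMulVec {n : Type*} [Fintype n] (v : n → ℂ) :
    (vecMulVec v (star v)).PosSemidef := by
  rw [vecMulVec_eq Unit, ← conjTranspose_replicateCol]
  exact posSemidef_self_mul_conjTranspose _

lemma psd_real_smul {n : Type*} [Fintype n] {M : Matrix n n ℂ} (hM : M.PosSemidef)
    {r : ℝ} (hr : 0 ≤ r) : ((r : ℂ) • M).PosSemidef := by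
  refine posSemidef_iff_dotProduct_mulVec.mpr ⟨?_, ?_⟩
  · unfold Matrix.IsHermitian
    rw [conjTranspose_smul, hM.1]
    simp
  · intro x
    rw [smul_mulVec, dotProduct_smul, smul_eq_mul]
    exact mul_nonneg (by exact_mod_cast hr) (hM.dotProduct_mulVec_nonneg x)

lemma psd_of_vmv (A : Matrix (Fin 2) (Fin 2) ℂ) (v : Fin 2 → ℂ)
    (h : A = vecMulVec v (star v)) : A.PosSemidef := h ▸ psd_vecMulVec v

variable {α : Type*} (x0 x1 x2 x3 x4 x5 x6 : α)

lemma vec7_0 : ![x0,x1,x2,x3,x4,x5,x6] 0 = x0 := rfl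
lemma vec7_1 : ![x0,x1,x2,x3,x4,x5,x6] 1 = x1 := rfl
lemma vec7_2 : ![x0,x1,x2,x3,x4,x5,x6] 2 = x2 := rfl
lemma vec7_3 : ![x0,x1,x2,x3,x4,x5,x6] 3 = x3 := rfl
lemma vec7_4 : ![x0,x1,x2,x3,x4,x5,x6] 4 = x4 := rfl
lemma vec7_5 : ![x0,x1,x2,x3,x4,x5,x6] 5 = x5 := rfl
lemma vec7_6 : ![x0,x1,x2,x3,x4,x5,x6] 6 = x6 := rfl

lemma vec7m_0 (h : (0:ℕ) < 7) : ![x0,x1,x2,x3,x4,x5,x6] ⟨0, h⟩ = x0 := rfl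
lemma vec7m_1 (h : (1:ℕ) < 7) : ![x0,x1,x2,x3,x4,x5,x6] ⟨1, h⟩ = x1 := rfl
lemma vec7m_2 (h : (2:ℕ) < 7) : ![x0,x1,x2,x3,x4,x5,x6] ⟨2, h⟩ = x2 := rfl
lemma vec7m_3 (h : (3:ℕ) < 7) : ![x0,x1,x2,x3,x4,x5,x6] ⟨3, h⟩ = x3 := rfl
lemma vec7m_4 (h : (4:ℕ) < 7) : ![x0,x1,x2,x3,x4,x5,x6] ⟨4, h⟩ = x4 := rfl
lemma vec7m_5 (h : (5:ℕ) < 7) : ![x0,x1,x2,x3,x4,x5,x6] ⟨5, h⟩ = x5 := rfl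
lemma vec7m_6 (h : (6:ℕ) < 7) : ![x0,x1,x2,x3,x4,x5,x6] ⟨6, h⟩ = x6 := rfl

end Aux

set_option maxHeartbeats 2000000 in
/-- Let `φ = (1/4)(I⊗I + a X⊗X + b Y⊗Y + c Z⊗Z)` with `a,b,c ∈ [0,1]`.
If `φ` is positive semidefinite, then `a + b + c ≤ 1`, the partial transpose of `φ` is
positive semidefinite, and `φ` is separable. -/
theorem stmt10 (a b c : ℝ) (ha : 0 ≤ a) (ha1 : a ≤ 1) (hb : 0 ≤ b) (hb1 : b ≤ 1)
    (hc : 0 ≤ c) (hc1 : c ≤ 1)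
    (φ : Matrix (Fin 2 × Fin 2) (Fin 2 × Fin 2) ℂ)
    (hφ : φ = (1 / 4 : ℂ) •
      ((1 : Matrix (Fin 2 × Fin 2) (Fin 2 × Fin 2) ℂ)
        + (a : ℂ) • (pauliX ⊗ₖ pauliX) + (b : ℂ) • (pauliY ⊗ₖ pauliY)
        + (c : ℂ) • (pauliZ ⊗ₖ pauliZ)))
    (hpsd : φ.PosSemidef) :
    a + b + c ≤ 1 ∧ (ptransposeB φ).PosSemidef ∧ Separable2 φ := by
  have habc : a + b + c ≤ 1 := by
    have h := hpsd.dotProduct_mulVec_nonneg (fun p => !![0, 1; -1, 0] p.1 p.2)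
    rw [hφ] at h
    have he : (star (fun p : Fin 2 × Fin 2 => (!![0, 1; -1, 0] : Matrix (Fin 2) (Fin 2) ℂ) p.1 p.2)) ⬝ᵥ
        (((1 / 4 : ℂ) • ((1 : Matrix (Fin 2 × Fin 2) (Fin 2 × Fin 2) ℂ)
          + (a : ℂ) • (pauliX ⊗ₖ pauliX) + (b : ℂ) • (pauliY ⊗ₖ pauliY)
          + (c : ℂ) • (pauliZ ⊗ₖ pauliZ))) *ᵥ (fun p => !![0, 1; -1, 0] p.1 p.2))
        = (((1 - a - b - c)/2 : ℝ) : ℂ) := by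
      simp [dotProduct, mulVec, Fintype.sum_prod_type, Fin.sum_univ_two, Matrix.add_apply,
        Matrix.smul_apply, Matrix.one_apply, kroneckerMap_apply, pauliX, pauliY, pauliZ,
        Complex.ext_iff]
      ring
    rw [he] at h
    have := (Complex.real_le_real.mp (by exact_mod_cast h))
    linarith
  refine ⟨habc, ?_, ?_⟩
  · -- partial transpose is PSD
    have key : ptransposeB φ =
        (((1 + a + b + c)/8 : ℝ) : ℂ) • vecMulVec (fun p : Fin 2 × Fin 2 => (!![1,0;0,1] : Matrix (Fin 2) (Fin 2) ℂ) p.1 p.2) (star fun p : Fin 2 × Fin 2 => (!![1,0;0,1] : Matrix (Fin 2) (Fin 2) ℂ) p.1 p.2)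
      + (((1 - a - b + c)/8 : ℝ) : ℂ) • vecMulVec (fun p : Fin 2 × Fin 2 => (!![1,0;0,-1] : Matrix (Fin 2) (Fin 2) ℂ) p.1 p.2) (star fun p : Fin 2 × Fin 2 => (!![1,0;0,-1] : Matrix (Fin 2) (Fin 2) ℂ) p.1 p.2)
      + (((1 + a - b - c)/8 : ℝ) : ℂ) • vecMulVec (fun p : Fin 2 × Fin 2 => (!![0,1;1,0] : Matrix (Fin 2) (Fin 2) ℂ) p.1 p.2) (star fun p : Fin 2 × Fin 2 => (!![0,1;1,0] : Matrix (Fin 2) (Fin 2) ℂ) p.1 p.2)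
      + (((1 - a + b - c)/8 : ℝ) : ℂ) • vecMulVec (fun p : Fin 2 × Fin 2 => (!![0,1;-1,0] : Matrix (Fin 2) (Fin 2) ℂ) p.1 p.2) (star fun p : Fin 2 × Fin 2 => (!![0,1;-1,0] : Matrix (Fin 2) (Fin 2) ℂ) p.1 p.2) := by
      ext ⟨i, j⟩ ⟨k, l⟩
      fin_cases i <;> fin_cases j <;> fin_cases k <;> fin_cases l <;>
        simp [ptransposeB, hφ, pauliX, pauliY, pauliZ, vecMulVec_apply, Matrix.one_apply,
          kroneckerMap_apply, Matrix.add_apply, Matrix.smul_apply, Complex.ext_iff] <;>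
        first | decide | ring
    rw [key]
    exact (((psd_real_smul (psd_vecMulVec _) (by linarith)).add
      (psd_real_smul (psd_vecMulVec _) (by linarith))).add
      (psd_real_smul (psd_vecMulVec _) (by linarith))).add
      (psd_real_smul (psd_vecMulVec _) (by linarith))
  · -- separability
    have hVpsd : ∀ i, (![(!![1,0;0,1] : Matrix (Fin 2) (Fin 2) ℂ), !![1,1;1,1], !![1,-1;-1,1],
        !![1,-Complex.I;Complex.I,1], !![1,Complex.I;-Complex.I,1],
        !![1,0;0,0], !![0,0;0,1]] i).PosSemidef := by
      have h1 : (!![1,0;0,1] : Matrix (Fin 2) (Fin 2) ℂ).PosSemidef := by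
        have : (!![1,0;0,1] : Matrix (Fin 2) (Fin 2) ℂ) = 1 := by
          ext i j; fin_cases i <;> fin_cases j <;> simp [Matrix.one_apply]
        rw [this]; exact Matrix.PosSemidef.one
      intro i
      fin_cases i
      · exact h1
      · exact psd_of_vmv !![1,1;1,1] ![1,1]
          (by ext i j; fin_cases i <;> fin_cases j <;> simp [vecMulVec_apply])
      · exact psd_of_vmv !![1,-1;-1,1] ![1,-1]
          (by ext i j; fin_cases i <;> fin_cases j <;> simp [vecMulVec_apply])
      · exact psd_of_vmv !![1,-Complex.I;Complex.I,1] ![1,Complex.I]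
          (by ext i j; fin_cases i <;> fin_cases j <;> simp [vecMulVec_apply, Complex.ext_iff])
      · exact psd_of_vmv !![1,Complex.I;-Complex.I,1] ![1,-Complex.I]
          (by ext i j; fin_cases i <;> fin_cases j <;> simp [vecMulVec_apply, Complex.ext_iff])
      · exact psd_of_vmv !![1,0;0,0] ![1,0]
          (by ext i j; fin_cases i <;> fin_cases j <;> simp [vecMulVec_apply])
      · exact psd_of_vmv !![0,0;0,1] ![0,1]
          (by ext i j; fin_cases i <;> fin_cases j <;> simp [vecMulVec_apply])
    refine ⟨7, ![(1-a-b-c)/4, a/8, a/8, b/8, b/8, c/2, c/2], _, _, ?_, hVpsd, hVpsd, ?_⟩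
    · intro i
      fin_cases i <;>
        simp only [vec7m_0, vec7m_1, vec7m_2, vec7m_3, vec7m_4, vec7m_5, vec7m_6] <;> linarith
    · rw [Fin.sum_univ_seven]
      simp only [vec7_0, vec7_1, vec7_2, vec7_3, vec7_4, vec7_5, vec7_6]
      ext ⟨i, j⟩ ⟨k, l⟩
      fin_cases i <;> fin_cases j <;> fin_cases k <;> fin_cases l <;>
        simp [hφ, pauliX, pauliY, pauliZ, Matrix.one_apply,
          kroneckerMap_apply, Matrix.add_apply, Matrix.smul_apply, Complex.ext_iff] <;>
        first | decide | ring
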